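/- arXiv:1507.02315 — 3 statements merged into one kernel-verified Lean document; each statement's English description precedes it below -/
import Mathlib

section
/- In the free group F(x,y), the word y²x²(y⁻¹x⁻¹)² is in the normal closure of the two words [y,x³] and (yx)²y⁻²x⁻². -/
/-- In the free group `F(x,y)`, the word `y²x²(y⁻¹x⁻¹)²` lies in the normal closure of
`[y,x³] = y x³ y⁻¹ x⁻³` and `(yx)² y⁻² x⁻²`. -/
theorem stmt_9 :
    let x : FreeGroup (Fin 2) := FreeGroup.of 0
    let y : FreeGroup (Fin 2) := FreeGroup.of 1
    y ^ 2 * x ^ 2 * (y⁻¹ * x⁻¹) ^ 2 ∈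
      Subgroup.normalClosure {y * x ^ 3 * y⁻¹ * x⁻¹ ^ 3,
        (y * x) ^ 2 * y⁻¹ ^ 2 * x⁻¹ ^ 2} := by
  intro x y
  set r1 : FreeGroup (Fin 2) := y * x ^ 3 * y⁻¹ * x⁻¹ ^ 3 with hr1
  set r2 : FreeGroup (Fin 2) := (y * x) ^ 2 * y⁻¹ ^ 2 * x⁻¹ ^ 2 with hr2
  set N := Subgroup.normalClosure {r1, r2} with hN
  have hn : N.Normal := Subgroup.normalClosure_normal
  have h1 : r1 ∈ N := Subgroup.subset_normalClosure (Set.mem_insert _ _)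
  have h2 : r2 ∈ N := Subgroup.subset_normalClosure (Set.mem_insert_of_mem _ rfl)
  have e : y ^ 2 * x ^ 2 * (y⁻¹ * x⁻¹) ^ 2 =
      (y * r1 * y⁻¹) * r1 * (x * r2⁻¹ * x⁻¹) := by
    rw [hr1, hr2]; decide
  rw [e]
  exact mul_mem (mul_mem (hn.conj_mem _ h1 y) h1) (hn.conj_mem _ (inv_mem h2) x)
end

section
/- In the free group F(x,y), the word [y³,x] = y³xy⁻³x⁻¹ is in the normal closure of the two words [y,x³] and (yx)²y⁻²x⁻². -/
/-- In the free group `F(x,y)`, the word `[y³,x] = y³ x y⁻³ x⁻¹` lies in the normal closure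
of `[y,x³] = y x³ y⁻¹ x⁻³` and `(yx)² y⁻² x⁻²`. -/
theorem stmt_10 :
    let x : FreeGroup (Fin 2) := FreeGroup.of 0
    let y : FreeGroup (Fin 2) := FreeGroup.of 1
    y ^ 3 * x * y⁻¹ ^ 3 * x⁻¹ ∈
      Subgroup.normalClosure {y * x ^ 3 * y⁻¹ * x⁻¹ ^ 3,
        (y * x) ^ 2 * y⁻¹ ^ 2 * x⁻¹ ^ 2} := by
  intro x y
  set N := Subgroup.normalClosure ({y * x ^ 3 * y⁻¹ * x⁻¹ ^ 3,
        (y * x) ^ 2 * y⁻¹ ^ 2 * x⁻¹ ^ 2} : Set (FreeGroup (Fin 2))) with hN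
  rw [← QuotientGroup.eq_one_iff]
  have m1 : y * x ^ 3 * y⁻¹ * x⁻¹ ^ 3 ∈ N :=
    Subgroup.subset_normalClosure (Set.mem_insert _ _)
  have m2 : (y * x) ^ 2 * y⁻¹ ^ 2 * x⁻¹ ^ 2 ∈ N :=
    Subgroup.subset_normalClosure (Set.mem_insert_of_mem _ rfl)
  set X : FreeGroup (Fin 2) ⧸ N := QuotientGroup.mk x with hX
  set Y : FreeGroup (Fin 2) ⧸ N := QuotientGroup.mk y with hY
  have h1 : Y * X ^ 3 * Y⁻¹ * X⁻¹ ^ 3 = 1 := (QuotientGroup.eq_one_iff _).mpr m1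
  have h2 : (Y * X) ^ 2 * Y⁻¹ ^ 2 * X⁻¹ ^ 2 = 1 := (QuotientGroup.eq_one_iff _).mpr m2
  -- relation A : Y X³ = X³ Y
  have hA : Y * X ^ 3 = X ^ 3 * Y := by
    have h' : Y * X ^ 3 * Y⁻¹ = X ^ 3 := by
      calc Y * X ^ 3 * Y⁻¹ = (Y * X ^ 3 * Y⁻¹ * X⁻¹ ^ 3) * X ^ 3 := by group
        _ = X ^ 3 := by rw [h1]; group
    calc Y * X ^ 3 = (Y * X ^ 3 * Y⁻¹) * Y := by group
      _ = X ^ 3 * Y := by rw [h']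
  -- relation B : (YX)² = X²Y²
  have hB : (Y * X) ^ 2 = X ^ 2 * Y ^ 2 := by
    calc (Y * X) ^ 2 = ((Y * X) ^ 2 * Y⁻¹ ^ 2 * X⁻¹ ^ 2) * (X ^ 2 * Y ^ 2) := by group
      _ = X ^ 2 * Y ^ 2 := by rw [h2]; group
  -- (YX)³ = X³Y³
  have hC : (Y * X) ^ 3 = X ^ 3 * Y ^ 3 := by
    calc (Y * X) ^ 3 = Y * X * (Y * X) ^ 2 := by group
      _ = Y * X * (X ^ 2 * Y ^ 2) := by rw [hB]
      _ = (Y * X ^ 3) * Y ^ 2 := by group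
      _ = (X ^ 3 * Y) * Y ^ 2 := by rw [hA]
      _ = X ^ 3 * Y ^ 3 := by group
  -- (YX)⁴ computed two ways
  have hD : X ^ 2 * (Y ^ 2 * X ^ 2 * Y ^ 2) = X ^ 2 * (X * Y * X * Y * Y ^ 2) := by
    calc X ^ 2 * (Y ^ 2 * X ^ 2 * Y ^ 2) = (X ^ 2 * Y ^ 2) * (X ^ 2 * Y ^ 2) := by group
      _ = (Y * X) ^ 2 * (Y * X) ^ 2 := by rw [hB]
      _ = (Y * X) * (Y * X) ^ 3 := by group
      _ = (Y * X) * (X ^ 3 * Y ^ 3) := by rw [hC]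
      _ = (Y * X ^ 3) * (X * Y ^ 3) := by group
      _ = (X ^ 3 * Y) * (X * Y ^ 3) := by rw [hA]
      _ = X ^ 2 * (X * Y * X * Y * Y ^ 2) := by group
  -- (XY)² = Y²X²
  have hE : (X * Y) ^ 2 = Y ^ 2 * X ^ 2 := by
    have h' : Y ^ 2 * X ^ 2 * Y ^ 2 = X * Y * X * Y * Y ^ 2 := mul_left_cancel hD
    have h'' : Y ^ 2 * X ^ 2 = X * Y * X * Y := mul_right_cancel h'
    calc (X * Y) ^ 2 = X * Y * X * Y := by rw [pow_two, ← mul_assoc]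
      _ = Y ^ 2 * X ^ 2 := h''.symm
  -- (XY)³ two ways : X Y³ X² = Y³ X³
  have hF : (X * Y ^ 3) * X ^ 2 = (Y ^ 3 * X) * X ^ 2 := by
    calc (X * Y ^ 3) * X ^ 2 = X * Y * (Y ^ 2 * X ^ 2) := by group
      _ = X * Y * (X * Y) ^ 2 := by rw [hE]
      _ = (X * Y) ^ 3 := (pow_succ' _ _).symm
      _ = (X * Y) ^ 2 * (X * Y) := by rw [pow_succ]
      _ = Y ^ 2 * X ^ 2 * (X * Y) := by rw [hE]
      _ = Y ^ 2 * (X ^ 3 * Y) := by group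
      _ = Y ^ 2 * (Y * X ^ 3) := by rw [hA]
      _ = (Y ^ 3 * X) * X ^ 2 := by group
  have hG : Y ^ 3 * X = X * Y ^ 3 := (mul_right_cancel hF).symm
  -- finish
  have : ((y ^ 3 * x * y⁻¹ ^ 3 * x⁻¹ : FreeGroup (Fin 2)) : FreeGroup (Fin 2) ⧸ N)
      = Y ^ 3 * X * Y⁻¹ ^ 3 * X⁻¹ := by
    simp [hX, hY]
  rw [this]
  calc Y ^ 3 * X * Y⁻¹ ^ 3 * X⁻¹ = (Y ^ 3 * X) * Y⁻¹ ^ 3 * X⁻¹ := by group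
    _ = (X * Y ^ 3) * Y⁻¹ ^ 3 * X⁻¹ := by rw [hG]
    _ = 1 := by group
end

section
/- In the group H presented by ⟨x, y | x³ = 1, y³ = 1, (xy)³ = 1⟩, each of the four ribbon tromino boundary words [y,x³], (yx)²y⁻²x⁻², y²x²(y⁻¹x⁻¹)², and [y³,x] equals the identity. -/
/-- From `g³ = 1` we get `g² = g⁻¹`. -/
lemma sq_eq_inv_of_cube {G : Type*} [Group G] {g : G} (h : g ^ 3 = 1) : g ^ 2 = g⁻¹ :=
  eq_inv_of_mul_eq_one_left (by rw [← pow_succ]; exact h)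

/-- In `H = ⟨x, y | x³, y³, (xy)³⟩`, the four ribbon tromino boundary words
`[y,x³]`, `(yx)²y⁻²x⁻²`, `y²x²(y⁻¹x⁻¹)²`, `[y³,x]` are all trivial; i.e. each lies in the
normal closure of `{x³, y³, (xy)³}` in the free group `F(x,y)`. -/
theorem stmt_11 :
    let x : FreeGroup (Fin 2) := FreeGroup.of 0
    let y : FreeGroup (Fin 2) := FreeGroup.of 1
    let N := Subgroup.normalClosure {x ^ 3, y ^ 3, (x * y) ^ 3}
    y * x ^ 3 * y⁻¹ * x⁻¹ ^ 3 ∈ N ∧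
    (y * x) ^ 2 * y⁻¹ ^ 2 * x⁻¹ ^ 2 ∈ N ∧
    y ^ 2 * x ^ 2 * (y⁻¹ * x⁻¹) ^ 2 ∈ N ∧
    y ^ 3 * x * y⁻¹ ^ 3 * x⁻¹ ∈ N := by
  intro x y N
  have key : ∀ w : FreeGroup (Fin 2),
      ((w : FreeGroup (Fin 2) ⧸ N) = 1) → w ∈ N :=
    fun w h => (QuotientGroup.eq_one_iff w).mp h
  -- images of the relators in the quotient
  have hx : ((x : FreeGroup (Fin 2)) : FreeGroup (Fin 2) ⧸ N) ^ 3 = 1 := by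
    rw [← QuotientGroup.mk_pow, QuotientGroup.eq_one_iff]
    exact Subgroup.subset_normalClosure (by simp)
  have hy : ((y : FreeGroup (Fin 2)) : FreeGroup (Fin 2) ⧸ N) ^ 3 = 1 := by
    rw [← QuotientGroup.mk_pow, QuotientGroup.eq_one_iff]
    exact Subgroup.subset_normalClosure (by simp)
  have hxy : (((x : FreeGroup (Fin 2)) : FreeGroup (Fin 2) ⧸ N) *
      ((y : FreeGroup (Fin 2)) : FreeGroup (Fin 2) ⧸ N)) ^ 3 = 1 := by
    rw [← QuotientGroup.mk_mul, ← QuotientGroup.mk_pow, QuotientGroup.eq_one_iff]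
    exact Subgroup.subset_normalClosure (by simp)
  set a := ((x : FreeGroup (Fin 2)) : FreeGroup (Fin 2) ⧸ N) with ha
  set b := ((y : FreeGroup (Fin 2)) : FreeGroup (Fin 2) ⧸ N) with hb
  -- derived facts
  have hxi : (a⁻¹) ^ 3 = 1 := by rw [inv_pow, hx, inv_one]
  have hyi : (b⁻¹) ^ 3 = 1 := by rw [inv_pow, hy, inv_one]
  have hba : (b * a) ^ 3 = 1 := by
    have h1 : b * a = b * (a * b) * b⁻¹ := by group
    rw [h1, conj_pow, hxy, mul_one, mul_inv_cancel]
  have hyxi : ((b⁻¹ * a⁻¹)) ^ 3 = 1 := by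
    have : (b⁻¹ * a⁻¹) = (a * b)⁻¹ := by group
    rw [this, inv_pow, hxy, inv_one]
  refine ⟨?_, ?_, ?_, ?_⟩
  · apply key
    simp only [QuotientGroup.mk_mul, QuotientGroup.mk_pow, QuotientGroup.mk_inv]
    rw [← ha, ← hb, hx, hxi]
    group
  · apply key
    simp only [QuotientGroup.mk_mul, QuotientGroup.mk_pow, QuotientGroup.mk_inv]
    rw [← ha, ← hb, sq_eq_inv_of_cube hba, sq_eq_inv_of_cube hyi,
      sq_eq_inv_of_cube hxi]
    group
  · apply key
    simp only [QuotientGroup.mk_mul, QuotientGroup.mk_pow, QuotientGroup.mk_inv]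
    rw [← ha, ← hb, sq_eq_inv_of_cube hyxi, sq_eq_inv_of_cube hy,
      sq_eq_inv_of_cube hx]
    group
  · apply key
    simp only [QuotientGroup.mk_mul, QuotientGroup.mk_pow, QuotientGroup.mk_inv]
    rw [← ha, ← hb, hy, hyi]
    group
end
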